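/- Let I, J ⊆ ℝ be disjoint closed intervals with |I| + |J| = 1 and |I| ≠ |J|, with midpoints m₁, m₂, and let A = I ∪ J. If \hat{\chi}_A(1) = 0, then |m₁ − m₂| = k + 1/2 for some positive integer k, and consequently A tiles ℝ with translation set ℤ: ∑_{n∈ℤ} \chi_A(x − n) = 1 for almost every x ∈ ℝ. -/

import Mathlib

open MeasureTheory Real

noncomputable section

/-- The Fourier transform of the indicator function of a set `A ⊆ ℝ`,
`\hat{χ}_A(x) = ∫_A e^{-2πi x t} dt`. -/
def ftInd1 (A : Set ℝ) (x : ℝ) : ℂ :=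
  ∫ t in A, Complex.exp (((-(2 * π * x * t) : ℝ) : ℂ) * Complex.I)

lemma ft_Icc (m ℓ : ℝ) (hℓ : 0 ≤ ℓ) :
    ftInd1 (Set.Icc (m - ℓ / 2) (m + ℓ / 2)) 1
      = Complex.exp (((-(2 * π * m) : ℝ) : ℂ) * Complex.I) * ((Real.sin (π * ℓ) / π : ℝ) : ℂ) := by
  have hab : m - ℓ / 2 ≤ m + ℓ / 2 := by linarith
  have hπ : (π : ℂ) ≠ 0 := by exact_mod_cast Real.pi_ne_zero
  have hc : ((-(2 * π) : ℝ) : ℂ) * Complex.I ≠ 0 := by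
    simp [Complex.ext_iff, Real.pi_ne_zero]
  unfold ftInd1
  have h1 : ∀ t : ℝ, Complex.exp (((-(2 * π * 1 * t) : ℝ) : ℂ) * Complex.I)
      = Complex.exp ((((-(2 * π) : ℝ) : ℂ) * Complex.I) * (t : ℂ)) := by
    intro t; congr 1; push_cast; ring
  simp only [h1]
  rw [MeasureTheory.integral_Icc_eq_integral_Ioc, ← intervalIntegral.integral_of_le hab,
    integral_exp_mul_complex hc]
  have hb : (((-(2 * π) : ℝ) : ℂ) * Complex.I) * ((m + ℓ / 2 : ℝ) : ℂ)
      = ((-(2 * π * m) : ℝ) : ℂ) * Complex.I + (-((π * ℓ : ℝ) : ℂ)) * Complex.I := by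
    push_cast; ring
  have ha : (((-(2 * π) : ℝ) : ℂ) * Complex.I) * ((m - ℓ / 2 : ℝ) : ℂ)
      = ((-(2 * π * m) : ℝ) : ℂ) * Complex.I + (((π * ℓ : ℝ) : ℂ)) * Complex.I := by
    push_cast; ring
  rw [hb, ha, Complex.exp_add, Complex.exp_add, Complex.ofReal_div, Complex.ofReal_sin,
    Complex.sin]
  field_simp
  ring_nf
  rw [Complex.I_sq]
  push_cast
  ring

lemma tile (a ℓ : ℝ) (h0 : 0 < ℓ) (h1 : ℓ < 1) (k : ℤ) :
    ∀ᵐ x : ℝ, (∑' n : ℤ, (Set.Icc a (a + ℓ) ∪ Set.Icc (a + k + ℓ) (a + k + 1)).indicator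
      (fun _ => (1 : ℝ)) (x - (n : ℝ))) = 1 := by
  have hB : (volume : Measure ℝ) (⋃ n : ℤ, ({a + n, a + ℓ + n} : Set ℝ)) = 0 := by
    refine measure_iUnion_null fun n => ?_
    exact ((Set.countable_singleton _).insert _).measure_zero _
  filter_upwards [compl_mem_ae_iff.mpr hB] with x hx
  have hx' : ∀ n : ℤ, x ≠ a + n ∧ x ≠ a + ℓ + n := by
    intro n
    constructor <;> intro h <;> exact hx (Set.mem_iUnion.2 ⟨n, by simp [h]⟩)
  set N : ℤ := ⌊x - a⌋ with hN
  set f : ℝ := x - a - N with hfdef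
  have hf0 : 0 ≤ f := by
    have := Int.floor_le (x - a); simp [hfdef]; linarith
  have hf1 : f < 1 := by
    have := Int.lt_floor_add_one (x - a); simp [hfdef]; linarith
  have hfne0 : f ≠ 0 := by
    intro h; exact (hx' N).1 (by simp [hfdef] at h; linarith)
  have hfneℓ : f ≠ ℓ := by
    intro h; exact (hx' N).2 (by simp [hfdef] at h; linarith)
  have hf0' : 0 < f := lt_of_le_of_ne hf0 (Ne.symm hfne0)
  have hxn : ∀ n : ℤ, x - n = a + f + ((N - n : ℤ) : ℝ) := by
    intro n; push_cast; simp [hfdef]; ring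
  have memI : ∀ n : ℤ, x - (n : ℝ) ∈ Set.Icc a (a + ℓ) → n = N ∧ f ≤ ℓ := by
    intro n hm
    rw [hxn n] at hm
    obtain ⟨hl, hr⟩ := hm
    have hj1 : (-1 : ℝ) < ((N - n : ℤ) : ℝ) := by linarith
    have hj2 : ((N - n : ℤ) : ℝ) < 1 := by linarith
    have e1 : (-1 : ℤ) < N - n := by exact_mod_cast hj1
    have e2 : (N - n : ℤ) < 1 := by exact_mod_cast hj2
    have : n = N := by omega
    subst this
    simp at hl hr ⊢
    linarith
  have memJ : ∀ n : ℤ, x - (n : ℝ) ∈ Set.Icc (a + k + ℓ) (a + k + 1) → n = N - k ∧ ℓ ≤ f := by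
    intro n hm
    rw [hxn n] at hm
    obtain ⟨hl, hr⟩ := hm
    have hj1 : ((k : ℝ)) < ((N - n : ℤ) : ℝ) + 1 := by linarith
    have hj2 : ((N - n : ℤ) : ℝ) < (k : ℝ) + 1 := by linarith
    have e1 : k < (N - n) + 1 := by exact_mod_cast hj1
    have e2 : (N - n : ℤ) < k + 1 := by exact_mod_cast hj2
    have hnk : n = N - k := by omega
    subst hnk
    have : ((N - (N - k) : ℤ) : ℝ) = (k : ℝ) := by push_cast; ring
    rw [this] at hl
    exact ⟨rfl, by linarith⟩
  set n₀ : ℤ := if f < ℓ then N else N - k with hn₀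
  rw [tsum_eq_single n₀ ?_]
  · rw [Set.indicator_of_mem]
    by_cases hc : f < ℓ
    · simp only [hn₀, if_pos hc]
      left
      rw [hxn N]
      constructor <;> simp <;> linarith
    · have hc' : ℓ < f := lt_of_le_of_ne (not_lt.mp hc) (Ne.symm hfneℓ)
      simp only [hn₀, if_neg hc]
      right
      rw [hxn (N - k)]
      have : ((N - (N - k) : ℤ) : ℝ) = (k : ℝ) := by push_cast; ring
      rw [this]
      constructor <;> [linarith; linarith]
  · intro n hn
    rw [Set.indicator_of_notMem]
    intro hmem
    rcases hmem with hm | hm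
    · obtain ⟨hnN, hfl⟩ := memI n hm
      by_cases hc : f < ℓ
      · exact hn (by simp [hn₀, if_pos hc, hnN])
      · have hc' : ℓ < f := lt_of_le_of_ne (not_lt.mp hc) (Ne.symm hfneℓ)
        linarith
    · obtain ⟨hnN, hfl⟩ := memJ n hm
      by_cases hc : f < ℓ
      · linarith
      · exact hn (by simp [hn₀, if_neg hc, hnN])

theorem two_intervals_tile_of_ft_vanishes_at_one
    (ℓ₁ ℓ₂ m₁ m₂ : ℝ) (h₁ : 0 < ℓ₁) (h₂ : 0 < ℓ₂)
    (hsum : ℓ₁ + ℓ₂ = 1) (hne : ℓ₁ ≠ ℓ₂)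
    (hdisj : Disjoint (Set.Icc (m₁ - ℓ₁ / 2) (m₁ + ℓ₁ / 2))
      (Set.Icc (m₂ - ℓ₂ / 2) (m₂ + ℓ₂ / 2)))
    (hzero : ftInd1 (Set.Icc (m₁ - ℓ₁ / 2) (m₁ + ℓ₁ / 2) ∪
      Set.Icc (m₂ - ℓ₂ / 2) (m₂ + ℓ₂ / 2)) 1 = 0) :
    (∃ k : ℕ, 0 < k ∧ |m₁ - m₂| = (k : ℝ) + 1 / 2) ∧
      ∀ᵐ x : ℝ, (∑' n : ℤ,
        (Set.Icc (m₁ - ℓ₁ / 2) (m₁ + ℓ₁ / 2) ∪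
          Set.Icc (m₂ - ℓ₂ / 2) (m₂ + ℓ₂ / 2)).indicator
            (fun _ => (1 : ℝ)) (x - (n : ℝ))) = 1 := by
  have hπ := Real.pi_pos
  have hℓ₁1 : ℓ₁ < 1 := by linarith
  -- split the integral over the union
  have hcont : Continuous fun t : ℝ => Complex.exp (((-(2 * π * 1 * t) : ℝ) : ℂ) * Complex.I) := by
    fun_prop
  have hsplit : ftInd1 (Set.Icc (m₁ - ℓ₁ / 2) (m₁ + ℓ₁ / 2) ∪
      Set.Icc (m₂ - ℓ₂ / 2) (m₂ + ℓ₂ / 2)) 1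
      = ftInd1 (Set.Icc (m₁ - ℓ₁ / 2) (m₁ + ℓ₁ / 2)) 1
        + ftInd1 (Set.Icc (m₂ - ℓ₂ / 2) (m₂ + ℓ₂ / 2)) 1 := by
    unfold ftInd1
    exact setIntegral_union hdisj measurableSet_Icc
      (hcont.integrableOn_Icc) (hcont.integrableOn_Icc)
  rw [hsplit, ft_Icc m₁ ℓ₁ h₁.le, ft_Icc m₂ ℓ₂ h₂.le] at hzero
  have hs : Real.sin (π * ℓ₂) = Real.sin (π * ℓ₁) := by
    have h : π * ℓ₂ = π - π * ℓ₁ := by nlinarith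
    rw [h, Real.sin_pi_sub]
  have hspos : 0 < Real.sin (π * ℓ₁) :=
    Real.sin_pos_of_pos_of_lt_pi (by positivity) (by nlinarith)
  rw [hs] at hzero
  have hcne : ((Real.sin (π * ℓ₁) / π : ℝ) : ℂ) ≠ 0 := by
    exact_mod_cast (div_pos hspos hπ).ne'
  have hprod : (Complex.exp (((-(2 * π * m₁) : ℝ) : ℂ) * Complex.I)
      + Complex.exp (((-(2 * π * m₂) : ℝ) : ℂ) * Complex.I))
      * ((Real.sin (π * ℓ₁) / π : ℝ) : ℂ) = 0 := by linear_combination hzero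
  have h0 : Complex.exp (((-(2 * π * m₁) : ℝ) : ℂ) * Complex.I)
      + Complex.exp (((-(2 * π * m₂) : ℝ) : ℂ) * Complex.I) = 0 := by
    rcases mul_eq_zero.mp hprod with h | h
    · exact h
    · exact absurd h hcne
  have hEE : Complex.exp (((-(2 * π * m₁) : ℝ) : ℂ) * Complex.I)
      = - Complex.exp (((-(2 * π * m₂) : ℝ) : ℂ) * Complex.I) := by
    linear_combination h0
  have hexp1 : Complex.exp (((-(2 * π * m₁) : ℝ) : ℂ) * Complex.I
      - ((-(2 * π * m₂) : ℝ) : ℂ) * Complex.I - (π : ℂ) * Complex.I) = 1 := by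
    rw [Complex.exp_sub, Complex.exp_sub, hEE, Complex.exp_pi_mul_I]
    rw [neg_div, div_self (Complex.exp_ne_zero _)]
    norm_num
  obtain ⟨n, hn⟩ := Complex.exp_eq_one_iff.mp hexp1
  have hre : -(2 * π * m₁) - (-(2 * π * m₂)) - π = (n : ℝ) * (2 * π) := by
    have h := congrArg Complex.im hn
    simpa [Complex.ext_iff] using h
  have hd : m₂ - m₁ = (n : ℝ) + 1 / 2 := by
    have hπ0 : (π : ℝ) ≠ 0 := Real.pi_ne_zero
    have h : π * (2 * (m₂ - m₁) - 1 - 2 * n) = 0 := by linarith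
    rcases mul_eq_zero.mp h with h' | h'
    · exact absurd h' hπ0
    · linarith
  -- separation from disjointness
  have hsep : 1 / 2 < |m₂ - m₁| := by
    by_contra hcon
    push_neg at hcon
    obtain ⟨hc1, hc2⟩ := abs_le.mp hcon
    refine Set.not_disjoint_iff.mpr ⟨max (m₁ - ℓ₁ / 2) (m₂ - ℓ₂ / 2), ?_, ?_⟩ hdisj
    · exact ⟨le_max_left _ _, max_le (by linarith) (by linarith)⟩
    · exact ⟨le_max_right _ _, max_le (by linarith) (by linarith)⟩
  constructor
  · rw [abs_sub_comm]
    by_cases hn0 : 0 ≤ n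
    · have hn1 : 1 ≤ n := by
        rcases lt_or_eq_of_le hn0 with h | h
        · omega
        · exfalso
          rw [hd, ← h] at hsep
          push_cast at hsep
          rw [abs_of_pos (by norm_num)] at hsep
          linarith
      have hn1R : (1 : ℝ) ≤ (n : ℝ) := by exact_mod_cast hn1
      refine ⟨n.toNat, by omega, ?_⟩
      have hcast : ((n.toNat : ℕ) : ℝ) = (n : ℝ) := by
        exact_mod_cast Int.toNat_of_nonneg hn0
      rw [abs_of_pos (by rw [hd]; linarith), hd, hcast]
    · push_neg at hn0
      have hn2 : n ≤ -2 := by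
        by_contra hcon2
        push_neg at hcon2
        have hmm : n = -1 := by omega
        rw [hd, hmm] at hsep
        push_cast at hsep
        rw [show (-1 : ℝ) + 1 / 2 = -(1 / 2) by norm_num, abs_neg,
          abs_of_pos (by norm_num)] at hsep
        linarith
      have hn2R : (n : ℝ) ≤ -2 := by exact_mod_cast hn2
      refine ⟨(-n - 1).toNat, by omega, ?_⟩
      have hcast : (((-n - 1).toNat : ℕ) : ℝ) = ((-n - 1 : ℤ) : ℝ) := by
        exact_mod_cast Int.toNat_of_nonneg (by omega : (0 : ℤ) ≤ -n - 1)
      have hneg : m₂ - m₁ < 0 := by rw [hd]; linarith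
      rw [abs_of_neg hneg, hd, hcast]
      push_cast
      ring
  · have hset : Set.Icc (m₁ - ℓ₁ / 2) (m₁ + ℓ₁ / 2) ∪ Set.Icc (m₂ - ℓ₂ / 2) (m₂ + ℓ₂ / 2)
        = Set.Icc (m₁ - ℓ₁ / 2) ((m₁ - ℓ₁ / 2) + ℓ₁)
          ∪ Set.Icc ((m₁ - ℓ₁ / 2) + n + ℓ₁) ((m₁ - ℓ₁ / 2) + n + 1) := by
      have e1 : m₁ + ℓ₁ / 2 = (m₁ - ℓ₁ / 2) + ℓ₁ := by ring
      have e2 : m₂ - ℓ₂ / 2 = (m₁ - ℓ₁ / 2) + n + ℓ₁ := by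
        have : m₂ = m₁ + n + 1 / 2 := by linarith
        rw [this]; linarith
      have e3 : m₂ + ℓ₂ / 2 = (m₁ - ℓ₁ / 2) + n + 1 := by
        have : m₂ = m₁ + n + 1 / 2 := by linarith
        rw [this]; linarith
      rw [e1, e2, e3]
    rw [hset]
    exact tile (m₁ - ℓ₁ / 2) ℓ₁ h₁ hℓ₁1 n
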